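/- Let f : ℝ^d → ℝ be differentiable with L-Lipschitz gradient, i.e. ‖∇f(x) − ∇f(y)‖ ≤ L‖x − y‖ for all x, y. Let β ∈ (0,1], σ ≥ 0, and let (θ_k) be a sequence of random vectors in ℝ^d and (ξ_k) a noise sequence with E[ξ_k | F_{k−1}] = 0 and E‖ξ_k‖² ≤ σ², where g_k = ∇f(θ_k) + ξ_k and ξ_k is independent of (m_{k−1}, θ_{k−1}, θ_k). Define m_k = (1−β) m_{k−1} + β g_k. Then E‖m_k − ∇f(θ_k)‖² ≤ (1−β) E‖m_{k−1} − ∇f(θ_{k−1})‖² + ((1−β)² L² / β) E‖θ_k − θ_{k−1}‖² + β² σ². -/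

import Mathlib

open MeasureTheory ProbabilityTheory

local notation "⟪" x ", " y "⟫" => @inner ℝ _ _ x y

lemma my_integrable_inner {Ω : Type*} [MeasurableSpace Ω] {μ : Measure Ω}
    {E : Type*} [NormedAddCommGroup E] [InnerProductSpace ℝ E]
    {f g : Ω → E} (hf : MemLp f 2 μ) (hg : MemLp g 2 μ) :
    Integrable (fun ω => ⟪f ω, g ω⟫) μ := by
  have h := MeasureTheory.L2.integrable_inner (𝕜 := ℝ) (hf.toLp f) (hg.toLp g)
  refine h.congr ?_
  filter_upwards [hf.coeFn_toLp, hg.coeFn_toLp] with ω h1 h2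
  rw [h1, h2]

lemma my_integrable_mul {Ω : Type*} [MeasurableSpace Ω] {μ : Measure Ω}
    {f g : Ω → ℝ} (hf : MemLp f 2 μ) (hg : MemLp g 2 μ) :
    Integrable (fun ω => f ω * g ω) μ := by
  have := my_integrable_inner hf hg
  simpa [RCLike.inner_apply, mul_comm] using this

lemma my_coord_memL2 {Ω : Type*} [MeasurableSpace Ω] {μ : Measure Ω} {d : ℕ}
    {A : Ω → EuclideanSpace ℝ (Fin d)} (hA : MemLp A 2 μ) (i : Fin d) :
    MemLp (fun ω => A ω i) 2 μ :=
  ((EuclideanSpace.proj i : EuclideanSpace ℝ (Fin d) →L[ℝ] ℝ).comp_memLp' hA :)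

lemma my_cross_zero {Ω : Type*} [MeasurableSpace Ω] {μ : Measure Ω}
    [IsProbabilityMeasure μ] {d : ℕ}
    {A Z : Ω → EuclideanSpace ℝ (Fin d)} (hA : MemLp A 2 μ) (hZ : MemLp Z 2 μ)
    (hind : ∀ i : Fin d, IndepFun (fun ω => Z ω i) (fun ω => A ω i) μ)
    (hmean : ∫ ω, Z ω ∂μ = 0) : ∫ ω, ⟪A ω, Z ω⟫ ∂μ = 0 := by
  have hintI : ∀ i : Fin d, Integrable (fun ω => A ω i * Z ω i) μ :=
    fun i => my_integrable_mul (my_coord_memL2 hA i) (my_coord_memL2 hZ i)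
  have hcoord : ∀ i : Fin d, ∫ ω, A ω i * Z ω i ∂μ = 0 := by
    intro i
    have hz : ∫ ω, Z ω i ∂μ = 0 := by
      have hint : Integrable Z μ := hZ.integrable (by norm_num)
      have h := (EuclideanSpace.proj i :
        EuclideanSpace ℝ (Fin d) →L[ℝ] ℝ).integral_comp_comm hint
      have h2 : ∫ ω, Z ω i ∂μ = (∫ x, Z x ∂μ) i := h
      rw [hmean] at h2
      simpa using h2
    have h := (hind i).integral_fun_mul_eq_mul_integral ((my_coord_memL2 hZ i).aestronglyMeasurable)
      ((my_coord_memL2 hA i).aestronglyMeasurable)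
    have h' : ∫ ω, Z ω i * A ω i ∂μ = (∫ ω, Z ω i ∂μ) * (∫ ω, A ω i ∂μ) := h
    rw [hz, zero_mul] at h'
    rw [← h']
    congr 1
    funext ω
    ring
  have hip : ∀ ω, ⟪A ω, Z ω⟫ = ∑ i : Fin d, A ω i * Z ω i := by
    intro ω
    simp [PiLp.inner_apply, RCLike.inner_apply, mul_comm]
  calc ∫ ω, ⟪A ω, Z ω⟫ ∂μ = ∫ ω, ∑ i : Fin d, A ω i * Z ω i ∂μ := by simp_rw [hip]
    _ = ∑ i : Fin d, ∫ ω, A ω i * Z ω i ∂μ :=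
        integral_finset_sum _ (fun i _ => hintI i)
    _ = 0 := by simp [hcoord]

lemma my_expand {Ω : Type*} [MeasurableSpace Ω] {μ : Measure Ω}
    [IsProbabilityMeasure μ] {E : Type*} [NormedAddCommGroup E] [InnerProductSpace ℝ E]
    (β : ℝ) (hβ0 : 0 < β)
    {A Z : Ω → E} (hA : MemLp A 2 μ) (hZ : MemLp Z 2 μ)
    (hcross : ∫ ω, ⟪A ω, Z ω⟫ ∂μ = 0) :
    ∫ ω, ‖A ω + β • Z ω‖ ^ 2 ∂μ
      = ∫ ω, ‖A ω‖ ^ 2 ∂μ + β ^ 2 * ∫ ω, ‖Z ω‖ ^ 2 ∂μ := by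
  have hIA : Integrable (fun ω => ‖A ω‖ ^ 2) μ := hA.norm.integrable_sq
  have hIZ : Integrable (fun ω => ‖Z ω‖ ^ 2) μ := hZ.norm.integrable_sq
  have hIAZ : Integrable (fun ω => ⟪A ω, Z ω⟫) μ := my_integrable_inner hA hZ
  have hexp : ∀ ω, ‖A ω + β • Z ω‖ ^ 2
      = (‖A ω‖ ^ 2 + β ^ 2 * ‖Z ω‖ ^ 2) + (2 * β) * ⟪A ω, Z ω⟫ := by
    intro ω
    have h1 : ⟪A ω, β • Z ω⟫ = β * ⟪A ω, Z ω⟫ := real_inner_smul_right _ _ _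
    have h2 : ‖β • Z ω‖ ^ 2 = β ^ 2 * ‖Z ω‖ ^ 2 := by
      rw [norm_smul, mul_pow, Real.norm_eq_abs, sq_abs]
    rw [norm_add_sq_real, h1, h2]
    ring
  calc ∫ ω, ‖A ω + β • Z ω‖ ^ 2 ∂μ
      = ∫ ω, (‖A ω‖ ^ 2 + β ^ 2 * ‖Z ω‖ ^ 2) + (2 * β) * ⟪A ω, Z ω⟫ ∂μ := by
        simp_rw [hexp]
    _ = (∫ ω, ‖A ω‖ ^ 2 + β ^ 2 * ‖Z ω‖ ^ 2 ∂μ) + ∫ ω, (2 * β) * ⟪A ω, Z ω⟫ ∂μ :=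
        integral_add (hIA.add (hIZ.const_mul _)) (hIAZ.const_mul _)
    _ = (∫ ω, ‖A ω‖ ^ 2 ∂μ) + β ^ 2 * (∫ ω, ‖Z ω‖ ^ 2 ∂μ)
          + (2 * β) * ∫ ω, ⟪A ω, Z ω⟫ ∂μ := by
        rw [integral_add hIA (hIZ.const_mul _), integral_const_mul, integral_const_mul]
    _ = ∫ ω, ‖A ω‖ ^ 2 ∂μ + β ^ 2 * ∫ ω, ‖Z ω‖ ^ 2 ∂μ := by
        rw [hcross]; ring

set_option maxHeartbeats 2000000 in
theorem adan_first_moment_error_recursion {d : ℕ} (hd : 0 < d)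
    {Ω : Type*} [MeasurableSpace Ω] (μ : Measure Ω) [IsProbabilityMeasure μ]
    (f : EuclideanSpace ℝ (Fin d) → ℝ) (hf : Differentiable ℝ f)
    (L σ β : ℝ) (hL : 0 ≤ L) (hσ : 0 ≤ σ) (hβ0 : 0 < β) (hβ1 : β ≤ 1)
    (hLip : ∀ x y, ‖gradient f x - gradient f y‖ ≤ L * ‖x - y‖)
    (θ ξ m : ℕ → Ω → EuclideanSpace ℝ (Fin d))
    (hξmean : ∀ k, ∫ ω, ξ k ω ∂μ = 0)
    (hξvar : ∀ k, ∫ ω, ‖ξ k ω‖ ^ 2 ∂μ ≤ σ ^ 2)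
    (hξL2 : ∀ k, MemLp (ξ k) 2 μ)
    (hθL2 : ∀ k, MemLp (θ k) 2 μ)
    (hmL2 : ∀ k, MemLp (m k) 2 μ)
    (hgradL2 : ∀ k, MemLp (fun ω => gradient f (θ k ω)) 2 μ)
    (hindep : ∀ k : ℕ, 1 ≤ k →
      IndepFun (ξ k) (fun ω => (m (k - 1) ω, θ (k - 1) ω, θ k ω)) μ)
    (hm : ∀ k : ℕ, 1 ≤ k →
      m k = fun ω => (1 - β) • m (k - 1) ω + β • (gradient f (θ k ω) + ξ k ω)) :
    ∀ k : ℕ, 1 ≤ k →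
      ∫ ω, ‖m k ω - gradient f (θ k ω)‖ ^ 2 ∂μ ≤
        (1 - β) * ∫ ω, ‖m (k - 1) ω - gradient f (θ (k - 1) ω)‖ ^ 2 ∂μ +
        ((1 - β) ^ 2 * L ^ 2 / β) * ∫ ω, ‖θ k ω - θ (k - 1) ω‖ ^ 2 ∂μ +
        β ^ 2 * σ ^ 2 := by
  intro k hk
  have hcontg : Continuous (gradient f) := by
    have hlw : LipschitzWith (Real.toNNReal L) (gradient f) := by
      apply LipschitzWith.of_dist_le_mul
      intro x y
      rw [dist_eq_norm, dist_eq_norm]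
      simpa [Real.coe_toNNReal L hL] using hLip x y
    exact hlw.continuous
  set A : Ω → EuclideanSpace ℝ (Fin d) :=
    fun ω => (1 - β) • (m (k - 1) ω - gradient f (θ k ω)) with hA
  have hAL2 : MemLp A 2 μ := ((hmL2 (k - 1)).sub (hgradL2 k)).const_smul (1 - β)
  have hdec : ∀ ω, m k ω - gradient f (θ k ω) = A ω + β • ξ k ω := by
    intro ω
    have hmk : m k ω = (1 - β) • m (k - 1) ω + β • (gradient f (θ k ω) + ξ k ω) :=
      congrFun (hm k hk) ω
    rw [hmk, hA]
    module
  -- independence of coordinates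
  have hF : Measurable (fun p : EuclideanSpace ℝ (Fin d) × EuclideanSpace ℝ (Fin d) ×
      EuclideanSpace ℝ (Fin d) => ((1 - β) • (p.1 - gradient f p.2.2) :
        EuclideanSpace ℝ (Fin d))) :=
    ((continuous_fst.sub (hcontg.comp (continuous_snd.comp continuous_snd))).const_smul
      (1 - β)).measurable
  have hindAZ : ∀ i : Fin d, IndepFun (fun ω => ξ k ω i) (fun ω => A ω i) μ := by
    intro i
    exact (hindep k hk).comp (EuclideanSpace.proj i : EuclideanSpace ℝ (Fin d) →L[ℝ] ℝ).continuous.measurable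
      ((EuclideanSpace.proj i : EuclideanSpace ℝ (Fin d) →L[ℝ] ℝ).continuous.measurable.comp hF)
  have hcross : ∫ ω, ⟪A ω, ξ k ω⟫ ∂μ = 0 :=
    my_cross_zero hAL2 (hξL2 k) hindAZ (hξmean k)
  -- expansion
  have hsplit : ∫ ω, ‖m k ω - gradient f (θ k ω)‖ ^ 2 ∂μ
      = ∫ ω, ‖A ω‖ ^ 2 ∂μ + β ^ 2 * ∫ ω, ‖ξ k ω‖ ^ 2 ∂μ := by
    rw [← my_expand β hβ0 hAL2 (hξL2 k) hcross]
    apply integral_congr_ae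
    filter_upwards with ω
    rw [hdec ω]
  -- bound on ∫ ‖A‖²
  have hXL2 : MemLp (fun ω => m (k - 1) ω - gradient f (θ (k - 1) ω)) 2 μ :=
    ((hmL2 (k - 1)).sub (hgradL2 (k - 1)) :)
  have hΔL2 : MemLp (fun ω => θ k ω - θ (k - 1) ω) 2 μ := ((hθL2 k).sub (hθL2 (k - 1)) :)
  have hIA : Integrable (fun ω => ‖A ω‖ ^ 2) μ := hAL2.norm.integrable_sq
  have hIX : Integrable (fun ω => ‖m (k - 1) ω - gradient f (θ (k - 1) ω)‖ ^ 2) μ :=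
    hXL2.norm.integrable_sq
  have hIΔ : Integrable (fun ω => ‖θ k ω - θ (k - 1) ω‖ ^ 2) μ := hΔL2.norm.integrable_sq
  have hpt : ∀ ω, β * ‖A ω‖ ^ 2 ≤
      β * (1 - β) * ‖m (k - 1) ω - gradient f (θ (k - 1) ω)‖ ^ 2
        + (1 - β) ^ 2 * L ^ 2 * ‖θ k ω - θ (k - 1) ω‖ ^ 2 := by
    intro ω
    have hAuv : A ω = (1 - β) • (m (k - 1) ω - gradient f (θ (k - 1) ω))
        + (1 - β) • (gradient f (θ (k - 1) ω) - gradient f (θ k ω)) := by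
      rw [hA]; module
    have h1 : ‖A ω‖ ≤ (1 - β) * ‖m (k - 1) ω - gradient f (θ (k - 1) ω)‖
        + (1 - β) * ‖gradient f (θ (k - 1) ω) - gradient f (θ k ω)‖ := by
      rw [hAuv]
      refine (norm_add_le _ _).trans ?_
      rw [norm_smul, norm_smul, Real.norm_eq_abs,
        abs_of_nonneg (by linarith : (0:ℝ) ≤ 1 - β)]
    have hvb : ‖gradient f (θ (k - 1) ω) - gradient f (θ k ω)‖
        ≤ L * ‖θ k ω - θ (k - 1) ω‖ := by
      have h2 := hLip (θ (k - 1) ω) (θ k ω)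
      rwa [norm_sub_rev (θ (k - 1) ω)] at h2
    set a := ‖m (k - 1) ω - gradient f (θ (k - 1) ω)‖ with ha
    set b := ‖gradient f (θ (k - 1) ω) - gradient f (θ k ω)‖ with hb
    set c := ‖θ k ω - θ (k - 1) ω‖ with hc
    have hb2 : (1 - β) ^ 2 * b ^ 2 ≤ (1 - β) ^ 2 * (L * c) ^ 2 := by
      have := mul_self_le_mul_self (norm_nonneg _) hvb
      nlinarith [sq_nonneg ((1:ℝ) - β)]
    have hA2 : ‖A ω‖ ^ 2 ≤ ((1 - β) * a + (1 - β) * b) ^ 2 :=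
      by nlinarith [norm_nonneg (A ω), h1]
    nlinarith [mul_nonneg (by linarith : (0:ℝ) ≤ 1 - β)
      (sq_nonneg (β * a - (1 - β) * b)), hβ0.le, norm_nonneg (A ω),
      mul_le_mul_of_nonneg_left hA2 hβ0.le]
  have hmono : β * ∫ ω, ‖A ω‖ ^ 2 ∂μ ≤
      β * (1 - β) * ∫ ω, ‖m (k - 1) ω - gradient f (θ (k - 1) ω)‖ ^ 2 ∂μ
        + (1 - β) ^ 2 * L ^ 2 * ∫ ω, ‖θ k ω - θ (k - 1) ω‖ ^ 2 ∂μ := by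
    rw [← integral_const_mul, ← integral_const_mul, ← integral_const_mul,
      ← integral_add (hIX.const_mul _) (hIΔ.const_mul _)]
    exact integral_mono (hIA.const_mul _) ((hIX.const_mul _).add (hIΔ.const_mul _)) hpt
  have hAbound : ∫ ω, ‖A ω‖ ^ 2 ∂μ ≤
      (1 - β) * ∫ ω, ‖m (k - 1) ω - gradient f (θ (k - 1) ω)‖ ^ 2 ∂μ
        + ((1 - β) ^ 2 * L ^ 2 / β) * ∫ ω, ‖θ k ω - θ (k - 1) ω‖ ^ 2 ∂μ := by
    refine le_of_mul_le_mul_left ?_ hβ0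
    calc β * ∫ ω, ‖A ω‖ ^ 2 ∂μ
        ≤ β * (1 - β) * ∫ ω, ‖m (k - 1) ω - gradient f (θ (k - 1) ω)‖ ^ 2 ∂μ
          + (1 - β) ^ 2 * L ^ 2 * ∫ ω, ‖θ k ω - θ (k - 1) ω‖ ^ 2 ∂μ := hmono
      _ = β * ((1 - β) * ∫ ω, ‖m (k - 1) ω - gradient f (θ (k - 1) ω)‖ ^ 2 ∂μ
          + ((1 - β) ^ 2 * L ^ 2 / β) * ∫ ω, ‖θ k ω - θ (k - 1) ω‖ ^ 2 ∂μ) := by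
        field_simp
  have hZbound : β ^ 2 * ∫ ω, ‖ξ k ω‖ ^ 2 ∂μ ≤ β ^ 2 * σ ^ 2 :=
    mul_le_mul_of_nonneg_left (hξvar k) (sq_nonneg β)
  rw [hsplit]
  linarith
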